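/- arXiv:2503.06110 — 2 statements merged into one kernel-verified Lean document; each statement's English description precedes it below -/
import Mathlib

section
/- If x ∈ K^n and v = (f_1/g, ..., f_n/g) ∈ F_q(X)^n ∩ Z_O^n satisfies d(x, v) ≤ ψ(H(v)), and t satisfies e^{nt} = Ψ(H(v)) where Ψ(s) = ψ(s)^{-n/(n+1)}, then ||g_t u_x v|| ≤ e^{-nt} Ψ^{-1}(e^{nt}) and |⟨e_1, g_t u_x v⟩| = ||g_t u_x v||, where v = (g, f_1, ..., f_n) is the integer vector associated to v. -/
open scoped Classical ENNReal
noncomputable section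

/-- The absolute value on `K = 𝔽_q((X⁻¹))`, modelled as Laurent series in `T = X⁻¹`:
`|x| = e^{-(order of x)}`, so that `|X| = e`. -/
def kabs {Fq : Type} [Field Fq] (x : LaurentSeries Fq) : ℝ :=
  if x = 0 then 0 else Real.exp (-(x.order : ℝ))

lemma kabs_nonneg {Fq : Type} [Field Fq] (x : LaurentSeries Fq) : 0 ≤ kabs x := by
  unfold kabs; split <;> positivity

lemma kabs_eq_zero {Fq : Type} [Field Fq] {x : LaurentSeries Fq} :
    kabs x = 0 ↔ x = 0 := by
  unfold kabs; split
  · simp_all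
  · simp_all [Real.exp_ne_zero]

lemma kabs_neg {Fq : Type} [Field Fq] (x : LaurentSeries Fq) : kabs (-x) = kabs x := by
  unfold kabs
  simp [HahnSeries.order_neg, neg_eq_zero]

lemma kabs_add_le {Fq : Type} [Field Fq] (x y : LaurentSeries Fq) :
    kabs (x + y) ≤ max (kabs x) (kabs y) := by
  by_cases hx : x = 0
  · simp [hx, le_max_iff, le_refl]
  by_cases hy : y = 0
  · simp [hy, le_max_iff, le_refl]
  by_cases hxy : x + y = 0
  · simp only [hxy, kabs, if_pos rfl, le_max_iff]
    left; exact kabs_nonneg x |>.trans (by simp [kabs, hx, le_refl])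
  · have h := HahnSeries.min_order_le_order_add hxy
    simp only [kabs, if_neg hx, if_neg hy, if_neg hxy, le_max_iff]
    rcases le_total x.order y.order with h' | h'
    · left
      apply Real.exp_le_exp.2
      have : x.order ≤ (x + y).order := le_trans (by simp [min_eq_left h']) h
      have h2 : (x.order : ℝ) ≤ ((x + y).order : ℝ) := by exact_mod_cast this
      linarith
    · right
      apply Real.exp_le_exp.2
      have : y.order ≤ (x + y).order := le_trans (by simp [min_eq_right h']) h
      have h2 : (y.order : ℝ) ≤ ((x + y).order : ℝ) := by exact_mod_cast this
      linarith

instance (priority := 10000) kMetric (Fq : Type) [Field Fq] :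
    MetricSpace (LaurentSeries Fq) where
  dist x y := kabs (x - y)
  dist_self x := by simp [kabs]
  dist_comm x y := by
    show kabs (x - y) = kabs (y - x)
    have h : x - y = -(y - x) := by ring
    rw [h, kabs_neg]
  dist_triangle x y z := by
    have h := kabs_add_le (x - y) (y - z)
    rw [sub_add_sub_cancel] at h
    exact h.trans (max_le (le_add_of_nonneg_right (kabs_nonneg _))
      (le_add_of_nonneg_left (kabs_nonneg _)))
  eq_of_dist_eq_zero h := sub_eq_zero.mp (kabs_eq_zero.mp h)

/-- The embedding of `𝔽_q[X]` into `K`, sending `X` to `T⁻¹`. -/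
def polyK (Fq : Type) [Field Fq] : Polynomial Fq →+* LaurentSeries Fq :=
  (Polynomial.aeval (HahnSeries.single (-1 : ℤ) (1 : Fq))).toRingHom

/-- The element `X` of `K`. -/
def Xe (Fq : Type) [Field Fq] : LaurentSeries Fq := HahnSeries.single (-1 : ℤ) 1

/-- Sup norm on `K^m`. -/
def supNorm {Fq : Type} [Field Fq] {m : ℕ} (v : Fin m → LaurentSeries Fq) : ℝ :=
  ⨆ i, kabs (v i)

/-- The diagonal flow `g_t = diag(X^{-nt}, X^t, …, X^t)`. -/
def gMat (Fq : Type) [Field Fq] (n : ℕ) (t : ℤ) :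
    Matrix (Fin (n+1)) (Fin (n+1)) (LaurentSeries Fq) :=
  Matrix.diagonal (fun i => if i = 0 then Xe Fq ^ (-(n : ℤ) * t) else Xe Fq ^ t)

/-- The unipotent matrix `u_x` with first column `(1, -x_1, …, -x_n)ᵀ`. -/
def uMat {Fq : Type} [Field Fq] {n : ℕ} (x : Fin n → LaurentSeries Fq) :
    Matrix (Fin (n+1)) (Fin (n+1)) (LaurentSeries Fq) :=
  Matrix.of fun i j =>
    if i = j then 1 else if hi : i = 0 then 0 else if j = 0 then -x (i.pred hi) else 0

/-- The integer vector `(g, f_1, …, f_n)` associated to a rational point. -/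
def assocVec {Fq : Type} [Field Fq] {n : ℕ} (f : Fin n → Polynomial Fq)
    (g : Polynomial Fq) : Fin (n+1) → LaurentSeries Fq :=
  Fin.cons (polyK Fq g) fun i => polyK Fq (f i)

/-- The height `H(v) = max(|g|, |f_1|, …, |f_n|)`. -/
def height {Fq : Type} [Field Fq] {n : ℕ} (f : Fin n → Polynomial Fq)
    (g : Polynomial Fq) : ℝ :=
  supNorm (assocVec f g)

/-- The rational point `(f_1/g, …, f_n/g) ∈ K^n`. -/
def ratPt {Fq : Type} [Field Fq] {n : ℕ} (f : Fin n → Polynomial Fq)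
    (g : Polynomial Fq) : Fin n → LaurentSeries Fq :=
  fun i => polyK Fq (f i) / polyK Fq g

/-- Points of the lattice `A · 𝔽_q[X]^m` in `K^m`. -/
def latticePts {Fq : Type} [Field Fq] {m : ℕ}
    (A : Matrix (Fin m) (Fin m) (LaurentSeries Fq)) :
    Set (Fin m → LaurentSeries Fq) :=
  {w | ∃ p : Fin m → Polynomial Fq, w = A.mulVec fun i => polyK Fq (p i)}

/-- First minimum of the lattice `A · 𝔽_q[X]^m`. -/
def lambda1 {Fq : Type} [Field Fq] {m : ℕ}
    (A : Matrix (Fin m) (Fin m) (LaurentSeries Fq)) : ℝ :=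
  sInf {r | ∃ w ∈ latticePts A, w ≠ 0 ∧ r = supNorm w}

/-- `i`-th successive minimum of the lattice `A · 𝔽_q[X]^m`. -/
def succMin {Fq : Type} [Field Fq] {m : ℕ}
    (A : Matrix (Fin m) (Fin m) (LaurentSeries Fq)) (i : ℕ) : ℝ :=
  sInf {r | ∃ v : Fin i → (Fin m → LaurentSeries Fq),
    (∀ j, v j ∈ latticePts A) ∧ LinearIndependent (LaurentSeries Fq) v ∧
    ∀ j, supNorm (v j) ≤ r}

/-- `x` is `ψ`-approximable. -/
def IsPsiApprox {Fq : Type} [Field Fq] {n : ℕ} (ψ : ℝ → ℝ)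
    (x : Fin n → LaurentSeries Fq) : Prop :=
  {fg : (Fin n → Polynomial Fq) × Polynomial Fq | fg.2 ≠ 0 ∧
    supNorm (fun i => x i - polyK Fq (fg.1 i) / polyK Fq fg.2) <
      ψ (kabs (polyK Fq fg.2))}.Infinite

/-- The set `Exact(ψ)` in the ultrametric formulation. -/
def ExactSet (Fq : Type) [Field Fq] (n : ℕ) (ψ : ℝ → ℝ) :
    Set (Fin n → LaurentSeries Fq) :=
  {x | (∀ i, kabs (x i) ≤ 1) ∧
    {fg : (Fin n → Polynomial Fq) × Polynomial Fq | fg.2 ≠ 0 ∧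
      supNorm (fun i => x i - polyK Fq (fg.1 i) / polyK Fq fg.2) =
        ψ (kabs (polyK Fq fg.2))}.Infinite ∧
    ∃ G : ℝ, ∀ (f : Fin n → Polynomial Fq) (g : Polynomial Fq), g ≠ 0 →
      G ≤ kabs (polyK Fq g) →
      ψ (kabs (polyK Fq g)) ≤ supNorm fun i => x i - polyK Fq (f i) / polyK Fq g}

/-- The lower order of infinity `λ_ψ` of `ψ`. -/
def lambdaPsi (ψ : ℝ → ℝ) : ℝ≥0∞ :=
  Filter.liminf (fun s => ENNReal.ofReal (-Real.log (ψ s) / Real.log s)) Filter.atTop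

section AuxLemmas
variable {Fq : Type} [Field Fq]

lemma kabs_pos {x : LaurentSeries Fq} (hx : x ≠ 0) : 0 < kabs x := by
  unfold kabs; rw [if_neg hx]; positivity

lemma kabs_mul' (x y : LaurentSeries Fq) : kabs (x * y) = kabs x * kabs y := by
  by_cases hx : x = 0; · simp [hx, kabs]
  by_cases hy : y = 0; · simp [hy, kabs]
  have hxy : x * y ≠ 0 := mul_ne_zero hx hy
  unfold kabs
  rw [if_neg hx, if_neg hy, if_neg hxy, HahnSeries.order_mul hx hy, ← Real.exp_add]
  push_cast; ring_nf

lemma kabs_div' (x y : LaurentSeries Fq) : kabs (x / y) = kabs x / kabs y := by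
  by_cases hy : y = 0; · simp [hy, kabs]
  have h := kabs_mul' (x / y) y
  rw [div_mul_cancel₀ x hy] at h
  rw [eq_comm, div_eq_iff (kabs_pos hy).ne', eq_comm]
  exact h.symm

lemma Xe_pow (k : ℕ) : (Xe Fq) ^ k = HahnSeries.single (-(k : ℤ)) 1 := by
  rw [Xe, HahnSeries.single_pow]
  simp

lemma Xe_zpow (m : ℤ) : (Xe Fq) ^ m = HahnSeries.single (-m) 1 := by
  obtain ⟨k, rfl | rfl⟩ := m.eq_nat_or_neg
  · rw [zpow_natCast, Xe_pow]
  · rw [zpow_neg, zpow_natCast, Xe_pow, neg_neg]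
    refine (eq_inv_of_mul_eq_one_left ?_).symm
    rw [HahnSeries.single_mul_single]
    simp [← HahnSeries.C_apply, map_one]

lemma kabs_Xe_zpow (m : ℤ) : kabs ((Xe Fq) ^ m) = Real.exp m := by
  rw [Xe_zpow]
  unfold kabs
  rw [if_neg (HahnSeries.single_ne_zero one_ne_zero),
    HahnSeries.order_single one_ne_zero]
  simp

lemma polyK_eq_sum (p : Polynomial Fq) :
    polyK Fq p = ∑ k ∈ p.support, HahnSeries.single (-(k : ℤ)) (p.coeff k) := by
  rw [polyK]
  simp only [AlgHom.toRingHom_eq_coe, RingHom.coe_coe]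
  rw [Polynomial.aeval_def, Polynomial.eval₂_eq_sum, Polynomial.sum_def]
  refine Finset.sum_congr rfl fun k _ => ?_
  have halg : ∀ a : Fq, algebraMap Fq (HahnSeries ℤ Fq) a = HahnSeries.single 0 a := by
    intro a
    rw [HahnSeries.algebraMap_apply', PowerSeries.algebraMap_apply, Algebra.algebraMap_self, RingHom.id_apply, HahnSeries.ofPowerSeries_C, HahnSeries.C_apply]
  rw [HahnSeries.single_pow, halg, HahnSeries.single_mul_single]
  simp

lemma polyK_coeff_natDegree (p : Polynomial Fq) :
    (polyK Fq p).coeff (-(p.natDegree : ℤ)) = p.leadingCoeff := by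
  have hsum : ∀ (s : Finset ℕ) (F : ℕ → HahnSeries ℤ Fq) (a : ℤ),
      (∑ i ∈ s, F i).coeff a = ∑ i ∈ s, (F i).coeff a :=
    fun s F a => map_sum (HahnSeries.coeff.addMonoidHom a) F s
  by_cases hp : p = 0
  · simp [hp, polyK_eq_sum]
  rw [polyK_eq_sum, hsum, Finset.sum_eq_single p.natDegree]
  · rw [HahnSeries.coeff_single_same, Polynomial.leadingCoeff]
  · intro k _ hk
    apply HahnSeries.coeff_single_of_ne
    simp only [ne_eq, neg_inj, Nat.cast_inj]
    exact Ne.symm hk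
  · intro h
    exact absurd (Polynomial.natDegree_mem_support_of_nonzero hp) h

lemma polyK_ne_zero {p : Polynomial Fq} (hp : p ≠ 0) : polyK Fq p ≠ 0 := by
  intro h
  have := polyK_coeff_natDegree p
  rw [h] at this
  simp only [HahnSeries.coeff_zero] at this
  exact Polynomial.leadingCoeff_ne_zero.mpr hp this.symm

lemma le_supNorm {m : ℕ} (v : Fin m → LaurentSeries Fq) (i : Fin m) :
    kabs (v i) ≤ supNorm v := by
  unfold supNorm
  exact le_ciSup (Set.Finite.bddAbove (Set.finite_range fun j => kabs (v j))) i

-- computation of the vector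
lemma uMat_mulVec_zero {n : ℕ} (x : Fin n → LaurentSeries Fq)
    (v : Fin (n+1) → LaurentSeries Fq) : (uMat x).mulVec v 0 = v 0 := by
  simp [Matrix.mulVec, dotProduct, uMat, eq_comm, Finset.sum_ite_eq]

lemma uMat_mulVec_succ {n : ℕ} (x : Fin n → LaurentSeries Fq)
    (v : Fin (n+1) → LaurentSeries Fq) (k : Fin n) :
    (uMat x).mulVec v k.succ = v k.succ - x k * v 0 := by
  simp only [Matrix.mulVec, dotProduct, uMat, Matrix.of_apply]
  rw [Fin.sum_univ_succ]
  simp [Fin.succ_ne_zero, Fin.pred_succ, Fin.succ_inj, eq_comm, Finset.sum_ite_eq]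
  ring
end AuxLemmas

/-- Dani correspondence, part (a). -/
theorem dani_a (Fq : Type) [Field Fq] [Fintype Fq] (n : ℕ) (hn : 0 < n)
    (ψ Φ : ℝ → ℝ) (hψpos : ∀ s > 0, 0 < ψ s)
    (hψdec : StrictAntiOn ψ (Set.Ioi 0))
    (hΦ1 : ∀ s > 0, Φ (ψ s ^ (-(n : ℝ) / (n + 1))) = s)
    (hΦ2 : ∀ y > 0, ψ (Φ y) ^ (-(n : ℝ) / (n + 1)) = y)
    (x : Fin n → LaurentSeries Fq)
    (f : Fin n → Polynomial Fq) (g : Polynomial Fq) (hg : g ≠ 0)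
    (hZO : ∀ i, kabs (ratPt f g i) ≤ 1)
    (hd : supNorm (fun i => x i - ratPt f g i) ≤ ψ (height f g))
    (t : ℤ) (ht : Real.exp (n * t) = ψ (height f g) ^ (-(n : ℝ) / (n + 1))) :
    supNorm ((gMat Fq n t * uMat x).mulVec (assocVec f g)) ≤
      Real.exp (-(n : ℝ) * t) * Φ (Real.exp (n * t)) ∧
    kabs ((gMat Fq n t * uMat x).mulVec (assocVec f g) 0) =
      supNorm ((gMat Fq n t * uMat x).mulVec (assocVec f g)) := by
  set H := kabs (polyK Fq g) with hHdef
  have hgK : polyK Fq g ≠ 0 := polyK_ne_zero hg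
  have hH : 0 < H := kabs_pos hgK
  have hfle : ∀ i, kabs (polyK Fq (f i)) ≤ H := by
    intro i
    have h := hZO i
    rw [ratPt] at h
    rw [kabs_div'] at h
    exact (div_le_one hH).mp h
  have hheight : height f g = H := by
    unfold height supNorm
    apply le_antisymm
    · apply ciSup_le
      intro i
      refine Fin.cases ?_ ?_ i
      · simp [assocVec, hHdef]
      · intro j; simpa [assocVec] using hfle j
    · have h := le_ciSup
        (Set.Finite.bddAbove (Set.finite_range fun i => kabs (assocVec f g i))) (0 : Fin (n+1))
      simpa [assocVec] using h
  have hA : 0 < ψ H := hψpos H hH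
  set E := Real.exp (t : ℝ) with hEdef
  have hEpos : 0 < E := Real.exp_pos _
  have hEn : Real.exp ((n : ℝ) * (t : ℝ)) = E ^ n := Real.exp_nat_mul _ n
  have ht' : E ^ n = ψ H ^ (-(n : ℝ) / (n + 1)) := by
    rw [← hEn, ht, hheight]
  have hn1 : ((n : ℝ) + 1) ≠ 0 := by positivity
  have hkey : E ^ (n + 1) * ψ H = 1 := by
    have h2 : (E ^ n) ^ (n + 1) = ψ H ^ (-(n : ℝ)) := by
      rw [ht', ← Real.rpow_natCast (ψ H ^ (-(n : ℝ) / (n + 1))) (n + 1),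
        ← Real.rpow_mul hA.le]
      congr 1
      push_cast
      field_simp
    have h3 : (E ^ (n + 1) * ψ H) ^ n = 1 := by
      rw [mul_pow, ← pow_mul, mul_comm (n+1) n, pow_mul, h2,
        ← Real.rpow_natCast (ψ H) n, ← Real.rpow_add hA]
      simp
    have hapos : 0 < E ^ (n + 1) * ψ H := by positivity
    rcases lt_trichotomy (E ^ (n + 1) * ψ H) 1 with hlt | heq | hgt
    · exfalso
      have := pow_lt_one₀ hapos.le hlt hn.ne'
      rw [h3] at this; exact lt_irrefl 1 this
    · exact heq
    · exfalso
      have := one_lt_pow₀ hgt hn.ne'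
      rw [h3] at this; exact lt_irrefl 1 this
  have hEA : E * ψ H = (E ^ n)⁻¹ := by
    refine eq_inv_of_mul_eq_one_right ?_
    rw [← hkey, pow_succ]; ring
  have hΦH : Φ (Real.exp ((n : ℝ) * (t : ℝ))) = H := by
    rw [ht, hheight]
    exact hΦ1 H hH
  have hRHS : Real.exp (-(n : ℝ) * (t : ℝ)) * Φ (Real.exp ((n : ℝ) * (t : ℝ)))
      = (E ^ n)⁻¹ * H := by
    rw [hΦH]
    congr 1
    rw [← hEn, ← Real.exp_neg]
    ring_nf
  set w := (gMat Fq n t * uMat x).mulVec (assocVec f g) with hwdef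
  have hw : ∀ i, w i = (if i = 0 then Xe Fq ^ (-(n : ℤ) * t) else Xe Fq ^ t) *
      (uMat x).mulVec (assocVec f g) i := by
    intro i
    rw [hwdef, ← Matrix.mulVec_mulVec, gMat, Matrix.mulVec_diagonal]
  have hv0 : assocVec f g 0 = polyK Fq g := rfl
  have hkw0 : kabs (w 0) = (E ^ n)⁻¹ * H := by
    rw [hw 0, if_pos rfl, uMat_mulVec_zero, hv0, kabs_mul', kabs_Xe_zpow]
    congr 1
    have hc : ((-(n : ℤ) * t : ℤ) : ℝ) = -((n : ℝ) * (t : ℝ)) := by push_cast; ring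
    rw [hc, Real.exp_neg, hEn]
  have hbound : ∀ k : Fin n, kabs (w k.succ) ≤ (E ^ n)⁻¹ * H := by
    intro k
    rw [hw k.succ, if_neg (Fin.succ_ne_zero k), uMat_mulVec_succ, hv0]
    have hvs : assocVec f g k.succ = polyK Fq (f k) := by simp [assocVec]
    rw [hvs, kabs_mul', kabs_Xe_zpow]
    have heq : polyK Fq (f k) - x k * polyK Fq g = -((x k - ratPt f g k) * polyK Fq g) := by
      rw [ratPt]
      field_simp
      ring
    have h1 : kabs (polyK Fq (f k) - x k * polyK Fq g) ≤ ψ H * H := by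
      rw [heq, kabs_neg, kabs_mul']
      refine mul_le_mul_of_nonneg_right ?_ hH.le
      refine (le_supNorm (fun i => x i - ratPt f g i) k).trans ?_
      rw [← hheight]; exact hd
    calc Real.exp ((t : ℤ) : ℝ) * kabs (polyK Fq (f k) - x k * polyK Fq g)
        ≤ E * (ψ H * H) := by
          refine mul_le_mul_of_nonneg_left h1 (Real.exp_pos _).le
      _ = (E * ψ H) * H := by ring
      _ = (E ^ n)⁻¹ * H := by rw [hEA]
  have hsup : supNorm w = (E ^ n)⁻¹ * H := by
    unfold supNorm
    apply le_antisymm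
    · apply ciSup_le
      intro i
      refine Fin.cases ?_ ?_ i
      · rw [hkw0]
      · exact hbound
    · rw [← hkw0]
      exact le_ciSup (Set.Finite.bddAbove (Set.finite_range fun j => kabs (w j))) (0 : Fin (n+1))
  constructor
  · rw [hsup]
    rw [hRHS]
  · rw [hsup, hkw0]
end
end

section
/- Minkowski's first theorem over function fields: every unimodular F_q[X]-lattice Λ in F_q((X^{-1}))^{n+1} (i.e., a lattice of covolume 1, of the form gF_q[X]^{n+1} with det g of absolute value 1) contains a nonzero vector v with ||v|| ≤ 1. -/
open scoped Classical ENNReal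
noncomputable section

namespace MinkAux

open HahnSeries Finset

variable {Fq : Type} [Field Fq]

/-- `x = 0` or the order of `x` is at least `a`. -/
def OG (x : LaurentSeries Fq) (a : ℤ) : Prop := x = 0 ∨ a ≤ x.order

lemma OG_zero (a : ℤ) : OG (0 : LaurentSeries Fq) a := Or.inl rfl

lemma OG_coeff {x : LaurentSeries Fq} {a k : ℤ} (h : OG x a) (hk : k < a) : x.coeff k = 0 := by
  rcases h with h | h
  · simp [h]
  · exact HahnSeries.coeff_eq_zero_of_lt_order (lt_of_lt_of_le hk h)

lemma OG_of_coeff {x : LaurentSeries Fq} {a : ℤ} (h : ∀ k < a, x.coeff k = 0) : OG x a := by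
  by_cases hx : x = 0
  · exact Or.inl hx
  · refine Or.inr ?_
    by_contra hlt
    exact (mt HahnSeries.coeff_order_eq_zero.mp hx) (h _ (lt_of_not_ge hlt))

lemma OG_mono {x : LaurentSeries Fq} {a b : ℤ} (hba : b ≤ a) (h : OG x a) : OG x b :=
  h.imp id (le_trans hba)

lemma OG_add {x y : LaurentSeries Fq} {a : ℤ} (hx : OG x a) (hy : OG y a) : OG (x + y) a :=
  OG_of_coeff fun k hk => by
    rw [HahnSeries.coeff_add, OG_coeff hx hk, OG_coeff hy hk, add_zero]

lemma OG_neg {x : LaurentSeries Fq} {a : ℤ} (hx : OG x a) : OG (-x) a := by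
  rcases hx with h | h
  · simp [h, OG_zero]
  · exact Or.inr (by rwa [HahnSeries.order_neg])

lemma OG_sum {ι : Type*} {s : Finset ι} {f : ι → LaurentSeries Fq} {a : ℤ}
    (h : ∀ i ∈ s, OG (f i) a) : OG (∑ i ∈ s, f i) a :=
  Finset.sum_induction f (fun x => OG x a) (fun _ _ hx hy => OG_add hx hy) (OG_zero a) h

lemma coeff_intCast_mul (m : ℤ) (x : LaurentSeries Fq) (k : ℤ) :
    (((m : LaurentSeries Fq)) * x).coeff k = (m : Fq) * x.coeff k := by
  rw [← zsmul_eq_mul, ← zsmul_eq_mul]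
  have h := map_zsmul (HahnSeries.coeff.addMonoidHom (R := Fq) (Γ := ℤ) k) m x
  simpa using h

lemma OG_intCast_mul (m : ℤ) {x : LaurentSeries Fq} {a : ℤ} (h : OG x a) :
    OG ((m : LaurentSeries Fq) * x) a :=
  OG_of_coeff fun k hk => by rw [coeff_intCast_mul, OG_coeff h hk, mul_zero]

lemma OG_mul {x y : LaurentSeries Fq} {a b : ℤ} (hx : OG x a) (hy : OG y b) :
    OG (x * y) (a + b) := by
  by_cases h0 : x = 0
  · simp [h0, OG_zero]
  by_cases h1 : y = 0
  · simp [h1, OG_zero]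
  exact Or.inr (by
    rw [HahnSeries.order_mul h0 h1]
    exact add_le_add (hx.resolve_left h0) (hy.resolve_left h1))

lemma lead_eq {x : LaurentSeries Fq} (hx : x ≠ 0) : x.leadingCoeff = x.coeff x.order := by
  rw [HahnSeries.leadingCoeff_eq]

lemma lead_mul {x y : LaurentSeries Fq} {a b : ℤ} (hx : OG x a) (hy : OG y b) :
    (x * y).coeff (a + b) = x.coeff a * y.coeff b := by
  by_cases h0 : x = 0
  · simp [h0]
  by_cases h1 : y = 0
  · simp [h1]
  have ha := hx.resolve_left h0
  have hb := hy.resolve_left h1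
  rcases ha.lt_or_eq with hlt | heq
  · have h2 : a + b < (x * y).order := by
      rw [HahnSeries.order_mul h0 h1]
      exact add_lt_add_of_lt_of_le hlt hb
    rw [HahnSeries.coeff_eq_zero_of_lt_order h2, HahnSeries.coeff_eq_zero_of_lt_order hlt,
      zero_mul]
  · rcases hb.lt_or_eq with hlt' | heq'
    · have h2 : a + b < (x * y).order := by
        rw [HahnSeries.order_mul h0 h1]
        exact add_lt_add_of_le_of_lt ha hlt'
      rw [HahnSeries.coeff_eq_zero_of_lt_order h2, HahnSeries.coeff_eq_zero_of_lt_order hlt',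
        mul_zero]
    · rw [heq, heq', HahnSeries.coeff_mul_order_add_order x y, lead_eq h0, lead_eq h1]

lemma OG_prod_lead {ι : Type*} (s : Finset ι) (f : ι → LaurentSeries Fq) (a : ι → ℤ)
    (h : ∀ i ∈ s, OG (f i) (a i)) :
    OG (∏ i ∈ s, f i) (∑ i ∈ s, a i) ∧
      (∏ i ∈ s, f i).coeff (∑ i ∈ s, a i) = ∏ i ∈ s, (f i).coeff (a i) := by
  classical
  induction s using Finset.cons_induction with
  | empty =>
      refine ⟨Or.inr (by rw [Finset.prod_empty, Finset.sum_empty, HahnSeries.order_one]), ?_⟩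
      simp
  | cons j s hj ih =>
      obtain ⟨hog, hc⟩ := ih fun i hi => h i (Finset.mem_cons_of_mem hi)
      have hjm := h j (Finset.mem_cons_self j s)
      rw [Finset.prod_cons, Finset.sum_cons]
      exact ⟨OG_mul hjm hog, by rw [lead_mul hjm hog, hc, Finset.prod_cons]⟩

/-- The minimum of orders of nonzero entries of a vector (junk value if `v = 0`). -/
def ordV {N : ℕ} (v : Fin (N+1) → LaurentSeries Fq) : ℤ :=
  WithTop.untopD 0 (Finset.univ.inf fun i =>
    if v i = 0 then (⊤ : WithTop ℤ) else ((v i).order : WithTop ℤ))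

lemma ordV_spec {N : ℕ} {v : Fin (N+1) → LaurentSeries Fq} (hv : ∃ i, v i ≠ 0) :
    (∃ i0, v i0 ≠ 0 ∧ (v i0).order = ordV v) ∧ ∀ i, v i ≠ 0 → ordV v ≤ (v i).order := by
  classical
  obtain ⟨i1, hi1⟩ := hv
  set g : Fin (N+1) → WithTop ℤ := fun i =>
    if v i = 0 then (⊤ : WithTop ℤ) else ((v i).order : WithTop ℤ) with hg
  obtain ⟨i0, -, hi0⟩ := Finset.exists_mem_eq_inf (Finset.univ) Finset.univ_nonempty g
  have hle : Finset.univ.inf g ≤ g i1 := Finset.inf_le (Finset.mem_univ i1)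
  have hne : g i0 ≠ ⊤ := by
    rw [← hi0]
    intro htop
    rw [htop] at hle
    have : g i1 = ⊤ := top_le_iff.mp hle
    simp [hg, hi1] at this
  have hvi0 : v i0 ≠ 0 := by
    intro h
    exact hne (by simp [hg, h])
  have hgi0 : g i0 = ((v i0).order : WithTop ℤ) := by simp [hg, hvi0]
  have hordV : ordV v = (v i0).order := by
    unfold ordV
    rw [← hg, hi0, hgi0, WithTop.untopD_coe]
  constructor
  · exact ⟨i0, hvi0, hordV.symm⟩
  · intro i hi
    have h1 : Finset.univ.inf g ≤ g i := Finset.inf_le (Finset.mem_univ i)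
    rw [hi0, hgi0] at h1
    have h2 : g i = ((v i).order : WithTop ℤ) := by simp [hg, hi]
    rw [h2] at h1
    rw [hordV]
    exact_mod_cast h1

lemma ordV_OG {N : ℕ} {v : Fin (N+1) → LaurentSeries Fq} (hv : ∃ i, v i ≠ 0) :
    ∀ i, OG (v i) (ordV v) := by
  intro i
  by_cases h : v i = 0
  · exact Or.inl h
  · exact Or.inr ((ordV_spec hv).2 i h)

/-- Leading coefficient vector. -/
def leadV {N : ℕ} (v : Fin (N+1) → LaurentSeries Fq) : Fin (N+1) → Fq :=
  fun i => (v i).coeff (ordV v)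

lemma ordV_ge {N : ℕ} {v : Fin (N+1) → LaurentSeries Fq} (hv : ∃ i, v i ≠ 0) {a : ℤ}
    (h : ∀ i, OG (v i) a) : a ≤ ordV v := by
  obtain ⟨⟨i0, hi0, hord⟩, -⟩ := ordV_spec hv
  rw [← hord]
  exact (h i0).resolve_left hi0

lemma polyK_C (c : Fq) : polyK Fq (Polynomial.C c) = HahnSeries.single 0 c := by
  show Polynomial.aeval _ (Polynomial.C c) = _
  rw [Polynomial.aeval_C, HahnSeries.algebraMap_apply' (Γ := ℤ), PowerSeries.algebraMap_apply,
    Algebra.algebraMap_self_apply, HahnSeries.ofPowerSeries_C, HahnSeries.C_apply]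

lemma polyK_monomial (e : ℕ) (c : Fq) :
    polyK Fq (Polynomial.monomial e c) = HahnSeries.single (-(e : ℤ)) c := by
  show Polynomial.aeval _ (Polynomial.monomial e c) = _
  rw [Polynomial.aeval_monomial, HahnSeries.single_pow]
  have h1 : (e : ℕ) • (-1 : ℤ) = -(e : ℤ) := by
    rw [nsmul_eq_mul]; ring
  rw [h1, HahnSeries.algebraMap_apply' (Γ := ℤ), PowerSeries.algebraMap_apply,
    Algebra.algebraMap_self_apply, HahnSeries.ofPowerSeries_C, HahnSeries.C_apply, one_pow,
    HahnSeries.single_mul_single, zero_add, mul_one]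

lemma kabs_le_one {x : LaurentSeries Fq} (h : OG x 0) : kabs x ≤ 1 := by
  unfold kabs
  split
  · norm_num
  · next hx =>
      have h0 : (0 : ℤ) ≤ x.order := h.resolve_left hx
      rw [show (1 : ℝ) = Real.exp 0 by simp]
      apply Real.exp_le_exp.2
      have : (0 : ℝ) ≤ (x.order : ℝ) := by exact_mod_cast h0
      linarith

lemma kabs_one {x : LaurentSeries Fq} (h : kabs x = 1) : x ≠ 0 ∧ x.order = 0 := by
  unfold kabs at h
  by_cases hx : x = 0
  · rw [if_pos hx] at h; norm_num at h
  · rw [if_neg hx] at h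
    refine ⟨hx, ?_⟩
    have hlog := congrArg Real.log h
    rw [Real.log_exp, Real.log_one] at hlog
    have h2 : (x.order : ℝ) = 0 := by linarith
    exact_mod_cast h2



variable {Fq : Type} [Field Fq]

/-- The transformed matrix. -/
def BB {n : ℕ} (A : Matrix (Fin (n+1)) (Fin (n+1)) (LaurentSeries Fq))
    (U : Matrix (Fin (n+1)) (Fin (n+1)) (Polynomial Fq)) :
    Matrix (Fin (n+1)) (Fin (n+1)) (LaurentSeries Fq) :=
  A * U.map (polyK Fq)

/-- Column `j` of the transformed matrix. -/
def colB {n : ℕ} (A : Matrix (Fin (n+1)) (Fin (n+1)) (LaurentSeries Fq))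
    (U : Matrix (Fin (n+1)) (Fin (n+1)) (Polynomial Fq)) (j : Fin (n+1)) :
    Fin (n+1) → LaurentSeries Fq :=
  fun i => BB A U i j

/-- Sum of column orders. -/
def sdeg {n : ℕ} (A : Matrix (Fin (n+1)) (Fin (n+1)) (LaurentSeries Fq))
    (U : Matrix (Fin (n+1)) (Fin (n+1)) (Polynomial Fq)) : ℤ :=
  ∑ j, ordV (colB A U j)

theorem main (n : ℕ) (A : Matrix (Fin (n+1)) (Fin (n+1)) (LaurentSeries Fq))
    (hA : kabs A.det = 1) :
    ∃ p : Fin (n+1) → Polynomial Fq, p ≠ 0 ∧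
      supNorm (A.mulVec fun i => polyK Fq (p i)) ≤ 1 := by
  classical
  obtain ⟨hdetA, hordA⟩ := kabs_one hA
  -- determinant facts for B A U
  have hdetB : ∀ U : Matrix (Fin (n+1)) (Fin (n+1)) (Polynomial Fq), IsUnit U.det →
      (BB A U).det ≠ 0 ∧ (BB A U).det.order = 0 := by
    intro U hU
    obtain ⟨c, hc, hcU⟩ := Polynomial.isUnit_iff.mp hU
    have hc0 : c ≠ 0 := hc.ne_zero
    have h1 : (U.map (polyK Fq)).det = polyK Fq U.det := by
      rw [← RingHom.mapMatrix_apply]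
      exact (RingHom.map_det _ _).symm
    have h2 : polyK Fq U.det = HahnSeries.single 0 c := by
      rw [← hcU, polyK_C]
    have hs : HahnSeries.single (0 : ℤ) c ≠ 0 := HahnSeries.single_ne_zero hc0
    have hdet : (BB A U).det = A.det * HahnSeries.single 0 c := by
      rw [BB, Matrix.det_mul, h1, h2]
    constructor
    · rw [hdet]
      exact mul_ne_zero hdetA hs
    · rw [hdet, HahnSeries.order_mul hdetA hs, hordA, HahnSeries.order_single hc0, add_zero]
  have hcolne : ∀ U : Matrix (Fin (n+1)) (Fin (n+1)) (Polynomial Fq), IsUnit U.det →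
      ∀ j, ∃ i, colB A U j i ≠ 0 := by
    intro U hU j
    by_contra h
    push_neg at h
    exact (hdetB U hU).1 (Matrix.det_eq_zero_of_column_eq_zero j h)
  -- Hadamard bound
  have hOGdetc : ∀ U : Matrix (Fin (n+1)) (Fin (n+1)) (Polynomial Fq), IsUnit U.det →
      OG ((BB A U).det) (sdeg A U) := by
    intro U hU
    rw [Matrix.det_apply']
    refine OG_sum fun σ _ => ?_
    have hp := (OG_prod_lead Finset.univ (fun i => BB A U (σ i) i)
        (fun i => ordV (colB A U i)) (fun i _ => ordV_OG (hcolne U hU i) (σ i))).1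
    rw [show sdeg A U = ∑ i, ordV (colB A U i) from rfl]
    exact OG_intCast_mul _ hp
  have hsdeg_le : ∀ U : Matrix (Fin (n+1)) (Fin (n+1)) (Polynomial Fq), IsUnit U.det →
      sdeg A U ≤ 0 := by
    intro U hU
    have h := (hOGdetc U hU).resolve_left (hdetB U hU).1
    rw [(hdetB U hU).2] at h
    exact h
  -- maximize sdeg
  obtain ⟨s0, ⟨U, hU, hsU⟩, hmax⟩ := Int.exists_greatest_of_bdd
    (P := fun z => ∃ U : Matrix (Fin (n+1)) (Fin (n+1)) (Polynomial Fq),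
      IsUnit U.det ∧ z = sdeg A U)
    ⟨0, by rintro z ⟨U, hU, rfl⟩; exact hsdeg_le U hU⟩
    ⟨sdeg A 1, 1, by rw [Matrix.det_one]; exact isUnit_one, rfl⟩
  set N : Matrix (Fin (n+1)) (Fin (n+1)) Fq :=
    Matrix.of (fun r j => leadV (colB A U j) r) with hNdef
  by_cases hN : N.det = 0
  · -- leading vectors dependent: contradiction with maximality
    exfalso
    obtain ⟨γ, hγ, hγ0⟩ := Matrix.exists_mulVec_eq_zero_iff.mpr hN
    have hrel : ∀ r, ∑ j, leadV (colB A U j) r * γ j = 0 := by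
      intro r
      have h := congrFun hγ0 r
      rw [hNdef] at h
      simpa [Matrix.mulVec, dotProduct] using h
    have hsupp : (Finset.univ.filter fun j => γ j ≠ 0).Nonempty := by
      obtain ⟨j, hj⟩ := Function.ne_iff.mp hγ
      refine ⟨j, Finset.mem_filter.mpr ⟨Finset.mem_univ j, ?_⟩⟩
      simpa using hj
    obtain ⟨j0, hj0mem, hj0inf⟩ :=
      Finset.exists_mem_eq_inf' hsupp (fun j => ordV (colB A U j))
    have hγj0 : γ j0 ≠ 0 := by
      have h := (Finset.mem_filter.mp hj0mem).2
      simpa using h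
    have hμmin : ∀ j, γ j ≠ 0 → ordV (colB A U j0) ≤ ordV (colB A U j) := by
      intro j hj
      rw [← hj0inf]
      exact Finset.inf'_le _ (by simp [hj])
    set e : Fin (n+1) → ℕ := fun j => (ordV (colB A U j) - ordV (colB A U j0)).toNat with he
    set coefP : Fin (n+1) → Polynomial Fq := fun j => Polynomial.monomial (e j) (γ j) with hcoefP
    set U' := U.updateCol j0 (fun k => ∑ l, coefP l • U k l) with hU'def
    have hcoefj0 : coefP j0 = Polynomial.C (γ j0) := by
      rw [hcoefP]
      simp only
      rw [show e j0 = 0 by rw [he]; simp, Polynomial.monomial_zero_left]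
    have hU' : IsUnit U'.det := by
      rw [hU'def, Matrix.det_updateCol_sum U j0 coefP, hcoefj0, smul_eq_mul]
      exact (Polynomial.isUnit_C.mpr (isUnit_iff_ne_zero.mpr hγj0)).mul hU
    have hBcol_ne : ∀ j, j ≠ j0 → ∀ i, BB A U' i j = BB A U i j := by
      intro j hj i
      simp only [BB, Matrix.mul_apply]
      refine Finset.sum_congr rfl fun k _ => ?_
      rw [hU'def, Matrix.map_updateCol, Matrix.updateCol_ne hj]
    have hBcol0 : ∀ i, BB A U' i j0 = ∑ l, polyK Fq (coefP l) * BB A U i l := by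
      intro i
      simp only [BB, Matrix.mul_apply]
      calc ∑ k, A i k * (U'.map (polyK Fq)) k j0
          = ∑ k, ∑ l, polyK Fq (coefP l) * (A i k * polyK Fq (U k l)) := by
            refine Finset.sum_congr rfl fun k _ => ?_
            rw [hU'def, Matrix.map_updateCol, Matrix.updateCol_self]
            show A i k * polyK Fq (∑ l, coefP l • U k l) = _
            rw [map_sum, Finset.mul_sum]
            refine Finset.sum_congr rfl fun l _ => ?_
            rw [smul_eq_mul, map_mul]
            ring
        _ = ∑ l, polyK Fq (coefP l) * ∑ k, A i k * polyK Fq (U k l) := by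
            rw [Finset.sum_comm]
            exact Finset.sum_congr rfl fun l _ => (Finset.mul_sum _ _ _).symm
        _ = ∑ l, polyK Fq (coefP l) * BB A U i l := by
            refine Finset.sum_congr rfl fun l _ => ?_
            simp [BB, Matrix.mul_apply, Matrix.map_apply]
    -- each term of the new column
    have hterm : ∀ i l, OG (polyK Fq (coefP l) * BB A U i l) (ordV (colB A U j0)) ∧
        (polyK Fq (coefP l) * BB A U i l).coeff (ordV (colB A U j0))
          = γ l * leadV (colB A U l) i := by
      intro i l
      by_cases hl : γ l = 0
      · have h0 : coefP l = 0 := by rw [hcoefP]; simp [hl]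
        rw [h0, map_zero, zero_mul]
        exact ⟨OG_zero _, by simp [hl]⟩
      · have hel : (e l : ℤ) = ordV (colB A U l) - ordV (colB A U j0) := by
          rw [he]
          exact Int.toNat_of_nonneg (sub_nonneg.mpr (hμmin l hl))
        have hK : polyK Fq (coefP l)
            = HahnSeries.single (ordV (colB A U j0) - ordV (colB A U l)) (γ l) := by
          rw [hcoefP]
          show polyK Fq (Polynomial.monomial (e l) (γ l)) = _
          rw [polyK_monomial, hel]
          ring_nf
        have hog1 : OG (polyK Fq (coefP l)) (ordV (colB A U j0) - ordV (colB A U l)) := by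
          rw [hK]
          exact Or.inr (le_of_eq (HahnSeries.order_single hl).symm)
        have hog2 : OG (BB A U i l) (ordV (colB A U l)) := ordV_OG (hcolne U hU l) i
        constructor
        · have h := OG_mul hog1 hog2
          rwa [sub_add_cancel] at h
        · have h := lead_mul hog1 hog2
          rw [sub_add_cancel] at h
          rw [h, hK, HahnSeries.coeff_single_same]
          rfl
    have hOGnew : ∀ i, OG (BB A U' i j0) (ordV (colB A U j0) + 1) := by
      intro i
      rw [hBcol0 i]
      have hsumog : OG (∑ l, polyK Fq (coefP l) * BB A U i l) (ordV (colB A U j0)) :=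
        OG_sum fun l _ => (hterm i l).1
      have hcoeff0 : (∑ l, polyK Fq (coefP l) * BB A U i l).coeff (ordV (colB A U j0)) = 0 := by
        have hms := map_sum (HahnSeries.coeff.addMonoidHom (ordV (colB A U j0)))
          (fun l => polyK Fq (coefP l) * BB A U i l) Finset.univ
        simp only [HahnSeries.coeff.addMonoidHom_apply] at hms
        rw [hms]
        rw [Finset.sum_congr rfl fun l _ => (hterm i l).2]
        rw [Finset.sum_congr rfl fun l _ => mul_comm (γ l) (leadV (colB A U l) i)]
        exact hrel i
      apply OG_of_coeff
      intro k hk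
      rcases lt_or_eq_of_le (Int.lt_add_one_iff.mp hk) with hlt | hkeq
      · exact OG_coeff hsumog hlt
      · rw [hkeq]
        exact hcoeff0
    have hord1 : ordV (colB A U j0) + 1 ≤ ordV (colB A U' j0) :=
      ordV_ge (hcolne U' hU' j0) hOGnew
    have hcoleq : ∀ j, j ≠ j0 → ordV (colB A U' j) = ordV (colB A U j) := by
      intro j hj
      have h : colB A U' j = colB A U j := funext fun i => hBcol_ne j hj i
      rw [h]
    have hgt : sdeg A U + 1 ≤ sdeg A U' := by
      simp only [sdeg]
      rw [← Finset.add_sum_erase _ (fun j => ordV (colB A U' j)) (Finset.mem_univ j0),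
          ← Finset.add_sum_erase _ (fun j => ordV (colB A U j)) (Finset.mem_univ j0)]
      have herase : ∑ j ∈ Finset.univ.erase j0, ordV (colB A U' j)
          = ∑ j ∈ Finset.univ.erase j0, ordV (colB A U j) := by
        refine Finset.sum_congr rfl fun j hj => ?_
        exact hcoleq j (Finset.mem_erase.mp hj).1
      rw [herase]
      omega
    have hin : sdeg A U' ≤ s0 := hmax (sdeg A U') ⟨U', hU', rfl⟩
    omega
  · -- leading vectors independent: sdeg A U = 0 and we extract a short vector
    have hlead : ((BB A U).det).coeff (sdeg A U) = N.det := by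
      rw [Matrix.det_apply' (BB A U), Matrix.det_apply' N]
      have hms := map_sum (HahnSeries.coeff.addMonoidHom (sdeg A U))
        (fun σ : Equiv.Perm (Fin (n+1)) =>
          ((Equiv.Perm.sign σ : ℤ) : LaurentSeries Fq) * ∏ i, BB A U (σ i) i) Finset.univ
      simp only [HahnSeries.coeff.addMonoidHom_apply] at hms
      rw [hms]
      refine Finset.sum_congr rfl fun σ _ => ?_
      obtain ⟨hog, hc⟩ := OG_prod_lead Finset.univ (fun i => BB A U (σ i) i)
        (fun i => ordV (colB A U i)) (fun i _ => ordV_OG (hcolne U hU i) (σ i))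
      have hNc : ∀ i, (BB A U (σ i) i).coeff (ordV (colB A U i)) = N (σ i) i := by
        intro i
        rw [hNdef]
        rfl
      have hcc : (∏ i, BB A U (σ i) i).coeff (sdeg A U) = ∏ i, N (σ i) i :=
        hc.trans (Finset.prod_congr rfl fun i _ => hNc i)
      rw [coeff_intCast_mul, hcc]
    have hord : (BB A U).det.order ≤ sdeg A U :=
      HahnSeries.order_le_of_coeff_ne_zero (by rw [hlead]; exact hN)
    rw [(hdetB U hU).2] at hord
    have hzero : sdeg A U = 0 := le_antisymm (hsdeg_le U hU) hord
    have hj : ∃ j, 0 ≤ ordV (colB A U j) := by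
      by_contra h
      push_neg at h
      have hneg : sdeg A U < 0 := by
        rw [sdeg]
        apply Finset.sum_neg (fun j _ => h j) Finset.univ_nonempty
      omega
    obtain ⟨j, hj⟩ := hj
    refine ⟨fun i => U i j, ?_, ?_⟩
    · intro h0
      obtain ⟨i, hi⟩ := hcolne U hU j
      apply hi
      simp only [colB, BB, Matrix.mul_apply]
      apply Finset.sum_eq_zero
      intro k _
      have hz : U k j = 0 := congrFun h0 k
      rw [Matrix.map_apply, hz, map_zero, mul_zero]
    · have hcol : (A.mulVec fun i => polyK Fq (U i j)) = colB A U j := by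
        funext i
        simp only [colB, BB, Matrix.mul_apply]
        simp [Matrix.mulVec, dotProduct, Matrix.map_apply]
      rw [hcol]
      refine ciSup_le fun i => ?_
      exact kabs_le_one (OG_mono hj (ordV_OG (hcolne U hU j) i))

end MinkAux


/-- Minkowski's first theorem over function fields. -/
theorem minkowski_first (Fq : Type) [Field Fq] [Fintype Fq] (n : ℕ)
    (A : Matrix (Fin (n+1)) (Fin (n+1)) (LaurentSeries Fq))
    (hA : kabs A.det = 1) :
    ∃ p : Fin (n+1) → Polynomial Fq, p ≠ 0 ∧
      supNorm (A.mulVec fun i => polyK Fq (p i)) ≤ 1 :=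
  MinkAux.main n A hA
end
end
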